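/- If β > 0 and α ≠ 0, then for all integers n ≥ −1 and all reals k, δ: I_n(k; α, β, δ) = −(e^{αk}/α)·Σ_{i=0}^{n} (β/α)^{n−i}·Hh_i(βk − δ) + (β/α)^{n+1}·(√(2π)/β)·e^{αδ/β + α²/(2β²)}·Φ(−βk + δ + α/β), where the sum is empty when n = −1 and Φ is the standard normal CDF. -/

import Mathlib

open MeasureTheory ProbabilityTheory Real Filter Set

/-- The standard normal cumulative distribution function `Φ`. -/
noncomputable def stdNormalCDF (x : ℝ) : ℝ := ((gaussianReal 0 1) (Set.Iic x)).toReal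

/-- The `Hh` functions: `Hh₋₁(x) = e^{−x²/2}` and, for `n ≥ 0`,
`Hh_n(x) = (1/n!)·∫_x^∞ (t − x)^n · e^{−t²/2} dt`. -/
noncomputable def Hh (n : ℤ) (x : ℝ) : ℝ :=
  if n = -1 then Real.exp (-x ^ 2 / 2)
  else if 0 ≤ n then
    (1 / (Nat.factorial n.toNat : ℝ))
      * ∫ t in Set.Ioi x, (t - x) ^ n.toNat * Real.exp (-t ^ 2 / 2)
  else 0

/-- `I_n(k; α, β, δ) = ∫_k^∞ e^{αx}·Hh_n(βx − δ) dx`. -/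
noncomputable def In (n : ℤ) (k α β δ : ℝ) : ℝ :=
  ∫ x in Set.Ioi k, Real.exp (α * x) * Hh n (β * x - δ)

lemma integrable_pow_gauss (n : ℕ) :
    Integrable (fun t : ℝ => t ^ n * Real.exp (-t ^ 2 / 2)) := by
  have hg : Integrable (fun t : ℝ =>
      (n.factorial : ℝ) * (Real.exp (1/2) * (Real.exp (-(1/2) * (t - 1) ^ 2)
        + Real.exp (-(1/2) * (t + 1) ^ 2)))) := by
    have h1 : Integrable (fun t : ℝ => Real.exp (-(1/2) * t ^ 2)) :=
      integrable_exp_neg_mul_sq (by norm_num)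
    have h2 := h1.comp_sub_right 1
    have h3 : Integrable (fun t : ℝ => Real.exp (-(1/2) * (t + 1) ^ 2)) := by
      simpa [sub_neg_eq_add] using h1.comp_sub_right (-1)
    exact ((h2.add h3).const_mul _).const_mul _
  refine hg.mono' (Continuous.aestronglyMeasurable (by continuity)) ?_
  filter_upwards with t
  have h1 : |t| ^ n ≤ (n.factorial : ℝ) * Real.exp |t| := by
    have := Real.pow_div_factorial_le_exp (x := |t|) (abs_nonneg t) n
    rw [div_le_iff₀ (by positivity)] at this
    linarith [this]
  have h2 : Real.exp (|t| - t ^ 2 / 2) ≤ Real.exp (1/2) * (Real.exp (-(1/2) * (t - 1) ^ 2)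
      + Real.exp (-(1/2) * (t + 1) ^ 2)) := by
    rcases abs_cases t with ⟨h, _⟩ | ⟨h, _⟩ <;> rw [h]
    · calc Real.exp (t - t ^ 2 / 2) = Real.exp (1/2) * Real.exp (-(1/2) * (t - 1) ^ 2) := by
            rw [← Real.exp_add]; ring_nf
      _ ≤ _ := by nlinarith [Real.exp_pos (-(1/2) * (t + 1) ^ 2), Real.exp_pos (1/2)]
    · calc Real.exp (-t - t ^ 2 / 2) = Real.exp (1/2) * Real.exp (-(1/2) * (t + 1) ^ 2) := by
            rw [← Real.exp_add]; ring_nf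
      _ ≤ _ := by nlinarith [Real.exp_pos (-(1/2) * (t - 1) ^ 2), Real.exp_pos (1/2)]
  calc ‖t ^ n * Real.exp (-t ^ 2 / 2)‖ = |t| ^ n * Real.exp (-t ^ 2 / 2) := by
        rw [norm_mul, norm_pow, Real.norm_eq_abs, Real.norm_eq_abs,
          abs_of_pos (Real.exp_pos _)]
  _ ≤ (n.factorial : ℝ) * Real.exp |t| * Real.exp (-t ^ 2 / 2) :=
      mul_le_mul_of_nonneg_right h1 (Real.exp_pos _).le
  _ = (n.factorial : ℝ) * Real.exp (|t| - t ^ 2 / 2) := by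
      rw [mul_assoc, ← Real.exp_add]; ring_nf
  _ ≤ _ := mul_le_mul_of_nonneg_left h2 (Nat.cast_nonneg _)

lemma integrable_pg (n : ℕ) (c : ℝ) :
    Integrable (fun t : ℝ => (t - c) ^ n * Real.exp (-t ^ 2 / 2)) := by
  have : (fun t : ℝ => (t - c) ^ n * Real.exp (-t ^ 2 / 2))
      = fun t => ∑ j ∈ Finset.range (n + 1),
        ((-c) ^ (n - j) * (n.choose j : ℝ)) * (t ^ j * Real.exp (-t ^ 2 / 2)) := by
    funext t
    rw [sub_eq_add_neg, add_pow, Finset.sum_mul]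
    exact Finset.sum_congr rfl fun j _ => by ring
  rw [this]
  exact integrable_finset_sum _ fun j _ => (integrable_pow_gauss j).const_mul _

lemma integral_Ioi_split {f : ℝ → ℝ} (hf : Integrable f) (a b : ℝ) :
    ∫ t in Set.Ioi a, f t = (∫ t in a..b, f t) + ∫ t in Set.Ioi b, f t := by
  rcases le_total a b with h | h
  · rw [intervalIntegral.integral_of_le h,
      ← setIntegral_union (Set.Ioc_disjoint_Ioi le_rfl) measurableSet_Ioi
        hf.integrableOn hf.integrableOn, Set.Ioc_union_Ioi_eq_Ioi h]
  · have := setIntegral_union (Set.Ioc_disjoint_Ioi (le_refl a)) measurableSet_Ioi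
      (hf.integrableOn (s := Set.Ioc b a)) (hf.integrableOn (s := Set.Ioi a))
    rw [Set.Ioc_union_Ioi_eq_Ioi h] at this
    rw [intervalIntegral.integral_symm, intervalIntegral.integral_of_le h, this]
    ring

lemma hasDerivAt_Ioi_integral {f : ℝ → ℝ} (hf : Integrable f) (hc : Continuous f) (x : ℝ) :
    HasDerivAt (fun y => ∫ t in Set.Ioi y, f t) (-f x) x := by
  have key : ∀ y, ∫ t in Set.Ioi y, f t
      = (∫ t in Set.Ioi (0:ℝ), f t) - ∫ t in (0:ℝ)..y, f t := fun y => by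
    rw [integral_Ioi_split hf 0 y]; ring
  have hF : HasDerivAt (fun y => ∫ t in (0:ℝ)..y, f t) (f x) x :=
    intervalIntegral.integral_hasDerivAt_right hf.intervalIntegrable
      (hc.stronglyMeasurableAtFilter _ _) hc.continuousAt
  have : (fun y => ∫ t in Set.Ioi y, f t)
      = fun y => (∫ t in Set.Ioi (0:ℝ), f t) - ∫ t in (0:ℝ)..y, f t := funext key
  rw [this]
  exact hF.const_sub _

lemma hasDerivAt_Mj (j : ℕ) (x : ℝ) :
    HasDerivAt (fun y => ∫ t in Set.Ioi y, t ^ j * Real.exp (-t ^ 2 / 2))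
      (-(x ^ j * Real.exp (-x ^ 2 / 2))) x :=
  hasDerivAt_Ioi_integral (integrable_pow_gauss j) (by continuity) x

lemma Hh_neg_one (x : ℝ) : Hh (-1) x = Real.exp (-x ^ 2 / 2) := if_pos rfl

lemma Hh_coe (m : ℕ) (x : ℝ) :
    Hh m x = (1 / (Nat.factorial m : ℝ))
      * ∫ t in Set.Ioi x, (t - x) ^ m * Real.exp (-t ^ 2 / 2) := by
  have h1 : (m : ℤ) ≠ -1 := by omega
  have h2 : (0 : ℤ) ≤ m := by omega
  simp [Hh, h1, h2]

lemma Hh_nonneg (n : ℤ) (x : ℝ) : 0 ≤ Hh n x := by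
  unfold Hh
  split
  · positivity
  split
  · apply mul_nonneg (by positivity)
    apply setIntegral_nonneg measurableSet_Ioi
    intro t ht
    have : 0 ≤ t - x := by simp at ht; linarith
    positivity
  · exact le_refl _

lemma Hh_eq_sum (m : ℕ) (x : ℝ) :
    Hh m x = (1 / (Nat.factorial m : ℝ))
      * ∑ j ∈ Finset.range (m + 1), (m.choose j : ℝ) * (-x) ^ (m - j)
          * ∫ t in Set.Ioi x, t ^ j * Real.exp (-t ^ 2 / 2) := by
  rw [Hh_coe]
  congr 1
  calc ∫ t in Set.Ioi x, (t - x) ^ m * Real.exp (-t ^ 2 / 2)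
      = ∫ t in Set.Ioi x, ∑ j ∈ Finset.range (m + 1),
          ((m.choose j : ℝ) * (-x) ^ (m - j)) * (t ^ j * Real.exp (-t ^ 2 / 2)) := by
        congr 1
        funext t
        rw [sub_eq_add_neg, add_pow, Finset.sum_mul]
        exact Finset.sum_congr rfl fun j _ => by ring
    _ = ∑ j ∈ Finset.range (m + 1),
          ∫ t in Set.Ioi x, ((m.choose j : ℝ) * (-x) ^ (m - j)) * (t ^ j * Real.exp (-t ^ 2 / 2)) :=
        integral_finset_sum _ fun j _ => ((integrable_pow_gauss j).const_mul _).integrableOn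
    _ = _ := by
        refine Finset.sum_congr rfl fun j _ => ?_
        rw [MeasureTheory.integral_const_mul]

lemma hasDerivAt_Hh (m : ℕ) (x : ℝ) :
    HasDerivAt (fun y => Hh (m : ℤ) y) (-Hh ((m : ℤ) - 1) x) x := by
  rcases m with _ | s
  · have h0 : (fun y : ℝ => Hh ((0 : ℕ) : ℤ) y)
        = fun y => ∫ t in Set.Ioi y, t ^ 0 * Real.exp (-t ^ 2 / 2) := by
      funext y
      rw [Hh_coe 0 y]
      simp
    rw [h0]
    have := hasDerivAt_Mj 0 x
    simpa [Hh_neg_one] using this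
  · set m := s + 1 with hm
    have hrep : (fun y : ℝ => Hh (m : ℤ) y)
        = fun y => (1 / (Nat.factorial m : ℝ))
          * ∑ j ∈ Finset.range (m + 1), ((m.choose j : ℝ) * (-y) ^ (m - j))
              * ∫ t in Set.Ioi y, t ^ j * Real.exp (-t ^ 2 / 2) :=
      funext fun y => Hh_eq_sum m y
    rw [hrep]
    have hterm : ∀ j ∈ Finset.range (m + 1),
        HasDerivAt (fun y : ℝ => ((m.choose j : ℝ) * (-y) ^ (m - j))
            * ∫ t in Set.Ioi y, t ^ j * Real.exp (-t ^ 2 / 2))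
          (((m.choose j : ℝ) * (((m - j : ℕ) : ℝ) * (-x) ^ (m - j - 1) * (-1)))
              * (∫ t in Set.Ioi x, t ^ j * Real.exp (-t ^ 2 / 2))
            + ((m.choose j : ℝ) * (-x) ^ (m - j)) * (-(x ^ j * Real.exp (-x ^ 2 / 2)))) x := by
      intro j _
      have hpow : HasDerivAt (fun y : ℝ => (-y) ^ (m - j))
          (((m - j : ℕ) : ℝ) * (-x) ^ (m - j - 1) * (-1)) x := by
        have h1 := (hasDerivAt_pow (m - j) (-x)).comp x (hasDerivAt_neg x)
        simpa [Function.comp_def] using h1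
      exact (hpow.const_mul _).mul (hasDerivAt_Mj j x)
    have hsum := (HasDerivAt.sum hterm).const_mul (1 / (Nat.factorial m : ℝ))
    convert hsum using 1
    · rfl
    · rfl
    · funext y
      simp only [Finset.sum_apply]
    have hms : (m : ℤ) - 1 = (s : ℤ) := by omega
    have hB : ∑ j ∈ Finset.range (m + 1),
        ((m.choose j : ℝ) * (-x) ^ (m - j)) * (-(x ^ j * Real.exp (-x ^ 2 / 2))) = 0 := by
      have hbin : ∑ j ∈ Finset.range (m + 1),
          x ^ j * (-x) ^ (m - j) * (m.choose j : ℝ) = 0 := by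
        rw [← add_pow]
        simp [hm]
      calc ∑ j ∈ Finset.range (m + 1),
            ((m.choose j : ℝ) * (-x) ^ (m - j)) * (-(x ^ j * Real.exp (-x ^ 2 / 2)))
          = -Real.exp (-x ^ 2 / 2) * ∑ j ∈ Finset.range (m + 1),
              x ^ j * (-x) ^ (m - j) * (m.choose j : ℝ) := by
            rw [Finset.mul_sum]
            exact Finset.sum_congr rfl fun j _ => by ring
        _ = 0 := by rw [hbin]; ring
    have hlast : ((m.choose m : ℝ) * (((m - m : ℕ) : ℝ) * (-x) ^ (m - m - 1) * (-1)))
        * (∫ t in Set.Ioi x, t ^ m * Real.exp (-t ^ 2 / 2)) = 0 := by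
      simp [Nat.sub_self]
    have key : (1 / (Nat.factorial m : ℝ)) * ∑ j ∈ Finset.range (m + 1),
        ((((m.choose j : ℝ) * (((m - j : ℕ) : ℝ) * (-x) ^ (m - j - 1) * (-1)))
              * (∫ t in Set.Ioi x, t ^ j * Real.exp (-t ^ 2 / 2)))
          + ((m.choose j : ℝ) * (-x) ^ (m - j)) * (-(x ^ j * Real.exp (-x ^ 2 / 2))))
        = -Hh ((m : ℤ) - 1) x := by
      rw [Finset.sum_add_distrib, hB, add_zero, Finset.sum_range_succ, hlast, add_zero,
        hms, Hh_eq_sum s x, ← hm]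
      rw [Finset.mul_sum, Finset.mul_sum, ← Finset.sum_neg_distrib]
      refine Finset.sum_congr rfl fun j hj => ?_
      have hj' : j ≤ s := by simpa [hm, Nat.lt_succ_iff] using hj
      have hexp : m - j - 1 = s - j := by omega
      have hc : ((m.choose j : ℝ)) * ((m - j : ℕ) : ℝ) = (m : ℝ) * (s.choose j : ℝ) := by
        have h2 := Nat.choose_succ_right_eq m j
        have h3 := Nat.add_one_mul_choose_eq s j
        have h1 : m.choose j * (m - j) = m * s.choose j := by
          simp [hm] at h2 h3 ⊢
          omega
        exact_mod_cast h1
      have hfac : ((m.factorial : ℝ)) = (m : ℝ) * (s.factorial : ℝ) := by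
        rw [hm, Nat.factorial_succ]
        push_cast
        ring
      set M := ∫ t in Set.Ioi x, t ^ j * Real.exp (-t ^ 2 / 2) with hM
      rw [hexp]
      have hsne : (s.factorial : ℝ) ≠ 0 := by positivity
      have hmne : (m : ℝ) ≠ 0 := by positivity
      rw [hfac]
      field_simp
      linear_combination (-((-x) ^ (s - j) * M)) * hc
    rw [← key]

lemma integral_Ioi_shift (g : ℝ → ℝ) (y : ℝ) :
    ∫ t in Set.Ioi y, g (t - y) = ∫ s in Set.Ioi (0 : ℝ), g s := by
  rw [← integral_indicator measurableSet_Ioi, ← integral_indicator measurableSet_Ioi]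
  have h : (Set.Ioi y).indicator (fun t => g (t - y))
      = fun t => (Set.Ioi (0 : ℝ)).indicator g (t - y) := by
    funext t
    simp [Set.indicator_apply, Set.mem_Ioi, sub_pos]
  rw [h, integral_sub_right_eq_self _ y]

lemma Hh_bound (n : ℤ) : ∃ C : ℝ, ∀ y : ℝ, 0 ≤ y → Hh n y ≤ C * Real.exp (-y ^ 2 / 2) := by
  rcases lt_trichotomy n (-1) with h | h | h
  · refine ⟨0, fun y _ => ?_⟩
    unfold Hh
    rw [if_neg (by omega), if_neg (by omega)]
    simp
  · exact ⟨1, fun y _ => by rw [h, Hh_neg_one, one_mul]⟩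
  · obtain ⟨m, rfl⟩ : ∃ m : ℕ, n = (m : ℤ) := ⟨n.toNat, by omega⟩
    refine ⟨(1 / (Nat.factorial m : ℝ)) * ∫ s in Set.Ioi (0:ℝ), s ^ m * Real.exp (-s ^ 2 / 2),
      fun y hy => ?_⟩
    rw [Hh_coe]
    have hint : IntegrableOn (fun t => (t - y) ^ m * Real.exp (-(t - y) ^ 2 / 2)
        * Real.exp (-y ^ 2 / 2)) (Set.Ioi y) := by
      have := ((integrable_pow_gauss m).mul_const (Real.exp (-y ^ 2 / 2))).comp_sub_right y
      exact this.integrableOn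
    have hmono : ∫ t in Set.Ioi y, (t - y) ^ m * Real.exp (-t ^ 2 / 2)
        ≤ ∫ t in Set.Ioi y, (t - y) ^ m * Real.exp (-(t - y) ^ 2 / 2)
            * Real.exp (-y ^ 2 / 2) := by
      refine setIntegral_mono_on ((integrable_pg m y).integrableOn) hint measurableSet_Ioi ?_
      intro t ht
      have hty : y < t := ht
      have hle : Real.exp (-t ^ 2 / 2) ≤ Real.exp (-(t - y) ^ 2 / 2) * Real.exp (-y ^ 2 / 2) := by
        rw [← Real.exp_add]
        apply Real.exp_le_exp.2
        nlinarith
      calc (t - y) ^ m * Real.exp (-t ^ 2 / 2)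
          ≤ (t - y) ^ m * (Real.exp (-(t - y) ^ 2 / 2) * Real.exp (-y ^ 2 / 2)) :=
            mul_le_mul_of_nonneg_left hle (pow_nonneg (by linarith) m)
        _ = _ := by ring
    have hshift : ∫ t in Set.Ioi y, (t - y) ^ m * Real.exp (-(t - y) ^ 2 / 2)
        * Real.exp (-y ^ 2 / 2)
        = (∫ s in Set.Ioi (0:ℝ), s ^ m * Real.exp (-s ^ 2 / 2)) * Real.exp (-y ^ 2 / 2) := by
      rw [← integral_mul_const]
      exact integral_Ioi_shift (fun s => s ^ m * Real.exp (-s ^ 2 / 2) * Real.exp (-y ^ 2 / 2)) y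
    have hfpos : (0:ℝ) < 1 / (Nat.factorial m : ℝ) := by positivity
    calc (1 / (Nat.factorial m : ℝ)) * ∫ t in Set.Ioi y, (t - y) ^ m * Real.exp (-t ^ 2 / 2)
        ≤ (1 / (Nat.factorial m : ℝ)) * ((∫ s in Set.Ioi (0:ℝ), s ^ m * Real.exp (-s ^ 2 / 2))
            * Real.exp (-y ^ 2 / 2)) := by
          rw [← hshift]
          exact mul_le_mul_of_nonneg_left hmono hfpos.le
      _ = _ := by ring

lemma tendsto_exp_mul_Hh (a b d : ℝ) (hb : 0 < b) (n : ℤ) :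
    Filter.Tendsto (fun x => Real.exp (a * x) * Hh n (b * x - d)) atTop (nhds 0) := by
  obtain ⟨C, hC⟩ := Hh_bound n
  have hq : Filter.Tendsto (fun x : ℝ => a * x - (b * x - d) ^ 2 / 2) atTop atBot := by
    have h1 : Filter.Tendsto (fun x : ℝ => b ^ 2 / 2 * x) atTop atTop :=
      Filter.Tendsto.const_mul_atTop (by positivity) tendsto_id
    have h2 : Filter.Tendsto (fun x : ℝ => -(b ^ 2 / 2 * x)) atTop atBot :=
      tendsto_neg_atTop_atBot.comp h1
    have h3 : Filter.Tendsto (fun x : ℝ => (a + b * d) + -(b ^ 2 / 2 * x)) atTop atBot :=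
      Filter.tendsto_atBot_add_const_left _ _ h2
    have h4 : Filter.Tendsto (fun x : ℝ => x * ((a + b * d) + -(b ^ 2 / 2 * x))) atTop atBot :=
      Filter.Tendsto.atTop_mul_atBot₀ tendsto_id h3
    have h5 : Filter.Tendsto (fun x : ℝ => x * ((a + b * d) + -(b ^ 2 / 2 * x)) + (-(d ^ 2) / 2))
        atTop atBot := Filter.tendsto_atBot_add_const_right _ _ h4
    have heq : (fun x : ℝ => a * x - (b * x - d) ^ 2 / 2)
        = fun x : ℝ => x * ((a + b * d) + -(b ^ 2 / 2 * x)) + (-(d ^ 2) / 2) := by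
      funext x; ring
    rw [heq]
    exact h5
  have hh : Filter.Tendsto (fun x : ℝ => C * Real.exp (a * x - (b * x - d) ^ 2 / 2))
      atTop (nhds 0) := by
    have := (Real.tendsto_exp_atBot.comp hq).const_mul C
    simpa using this
  refine squeeze_zero' ?_ ?_ hh
  · filter_upwards with x
    exact mul_nonneg (Real.exp_pos _).le (Hh_nonneg _ _)
  · filter_upwards [Filter.eventually_ge_atTop (d / b)] with x hx
    have h0 : 0 ≤ b * x - d := by
      rw [div_le_iff₀ hb] at hx
      linarith
    calc Real.exp (a * x) * Hh n (b * x - d)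
        ≤ Real.exp (a * x) * (C * Real.exp (-(b * x - d) ^ 2 / 2)) :=
          mul_le_mul_of_nonneg_left (hC _ h0) (Real.exp_pos _).le
      _ = C * Real.exp (a * x - (b * x - d) ^ 2 / 2) := by
          rw [mul_left_comm, ← Real.exp_add]
          ring_nf

lemma Hh_zero (y : ℝ) : Hh 0 y = ∫ t in Set.Ioi y, Real.exp (-t ^ 2 / 2) := by
  have := Hh_coe 0 y
  simpa using this

lemma stdNormalCDF_eq (y : ℝ) :
    Real.sqrt (2 * Real.pi) * stdNormalCDF (-y) = ∫ t in Set.Ioi y, Real.exp (-t ^ 2 / 2) := by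
  rw [stdNormalCDF, gaussianReal_apply_eq_integral 0 one_ne_zero]
  rw [ENNReal.toReal_ofReal (setIntegral_nonneg measurableSet_Iic
    fun t _ => gaussianPDFReal_nonneg 0 1 t)]
  have hpdf : ∀ t : ℝ, gaussianPDFReal 0 1 t
      = (Real.sqrt (2 * Real.pi))⁻¹ * Real.exp (-t ^ 2 / 2) := by
    intro t
    rw [gaussianPDFReal]
    norm_num
  simp_rw [hpdf]
  rw [MeasureTheory.integral_const_mul, ← mul_assoc,
    mul_inv_cancel₀ (by positivity : Real.sqrt (2 * Real.pi) ≠ 0), one_mul]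
  rw [← integral_comp_neg_Ioi]
  congr 1
  funext t
  ring_nf

lemma key_sum (a : ℝ) (ha0 : a ≠ 0) (n : ℤ) (N : ℕ) (hNn : (N : ℤ) = n + 1) (y : ℝ) :
    ∑ i ∈ Finset.range N, a ^ (n - (i : ℤ)) * Hh ((i : ℤ) - 1) y
      = a ^ n * Hh (-1) y
        + a⁻¹ * ((∑ i ∈ Finset.range N, a ^ (n - (i : ℤ)) * Hh i y) - Hh n y) := by
  rcases N with _ | M
  · have hn : n = -1 := by omega
    subst hn
    simp [zpow_neg, zpow_one]
  · have hn : n = (M : ℤ) := by omega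
    rw [Finset.sum_range_succ' (fun i => a ^ (n - (i : ℤ)) * Hh ((i : ℤ) - 1) y)]
    rw [Finset.sum_range_succ (fun i => a ^ (n - (i : ℤ)) * Hh (i : ℤ) y)]
    have h0 : a ^ (n - ((0:ℕ) : ℤ)) * Hh (((0:ℕ) : ℤ) - 1) y = a ^ n * Hh (-1) y := by
      norm_num
    rw [h0]
    have hterm : ∀ i : ℕ, a ^ (n - ((i + 1 : ℕ) : ℤ)) * Hh (((i + 1 : ℕ) : ℤ) - 1) y
        = a⁻¹ * (a ^ (n - (i : ℤ)) * Hh (i : ℤ) y) := by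
      intro i
      have hcast : ((i + 1 : ℕ) : ℤ) - 1 = (i : ℤ) := by push_cast; ring
      rw [hcast]
      have hz : a ^ (n - ((i + 1 : ℕ) : ℤ)) = a⁻¹ * a ^ (n - (i : ℤ)) := by
        have : n - ((i + 1 : ℕ) : ℤ) = (n - (i : ℤ)) + (-1) := by push_cast; ring
        rw [this, zpow_add₀ ha0, zpow_neg_one]
        ring
      rw [hz, mul_assoc]
    simp_rw [hterm]
    rw [← Finset.mul_sum]
    have hlastexp : a ^ (n - ((M : ℕ) : ℤ)) = 1 := by rw [hn]; simp
    rw [hlastexp, one_mul]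
    have hHhM : Hh ((M : ℕ) : ℤ) y = Hh n y := by rw [hn]
    rw [hHhM]
    ring

/-- If `β > 0` and `α ≠ 0`, then for all integers `n ≥ −1` and reals
`k, δ`:
`I_n(k; α, β, δ) = −(e^{αk}/α)·Σ_{i=0}^{n} (β/α)^{n−i}·Hh_i(βk − δ)
  + (β/α)^{n+1}·(√(2π)/β)·e^{αδ/β + α²/(2β²)}·Φ(−βk + δ + α/β)`
(the sum being empty when `n = −1`). -/
theorem In_closed_form (α β : ℝ) (hβ : 0 < β) (hα : α ≠ 0)
    (n : ℤ) (hn : -1 ≤ n) (k δ : ℝ) :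
    In n k α β δ
      = -(Real.exp (α * k) / α)
          * (∑ i ∈ Finset.range (n + 1).toNat, (β / α) ^ (n - (i : ℤ)) * Hh i (β * k - δ))
        + (β / α) ^ (n + 1) * (Real.sqrt (2 * Real.pi) / β)
            * Real.exp (α * δ / β + α ^ 2 / (2 * β ^ 2))
            * stdNormalCDF (-β * k + δ + α / β) := by
  have hβ0 : β ≠ 0 := ne_of_gt hβ
  set a : ℝ := β / α with ha
  have ha0 : a ≠ 0 := div_ne_zero hβ0 hα
  obtain ⟨N, hNn⟩ : ∃ N : ℕ, (N : ℤ) = n + 1 := ⟨(n + 1).toNat, Int.toNat_of_nonneg (by omega)⟩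
  rw [show (n + 1).toNat = N from by omega]
  set c₀ : ℝ := Real.exp (α * δ / β + α ^ 2 / (2 * β ^ 2)) with hc₀
  set c : ℝ := a ^ (n + 1) * (1 / β) * c₀ with hc
  set g : ℝ → ℝ := fun x => (1 / α) * (Real.exp (α * x)
      * ∑ i ∈ Finset.range N, a ^ (n - (i : ℤ)) * Hh i (β * x - δ))
    - c * Hh 0 (β * x - (δ + α / β)) with hg
  have hderiv : ∀ x, HasDerivAt g (Real.exp (α * x) * Hh n (β * x - δ)) x := by
    intro x
    have hlin : ∀ d : ℝ, HasDerivAt (fun y : ℝ => β * y - d) β x := fun d => by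
      simpa using ((hasDerivAt_id x).const_mul β).sub_const d
    have hHh : ∀ (i : ℕ) (d : ℝ), HasDerivAt (fun y => Hh (i : ℤ) (β * y - d))
        (-Hh ((i : ℤ) - 1) (β * x - d) * β) x := fun i d =>
      (hasDerivAt_Hh i (β * x - d)).comp (h := fun y => β * y - d) x (hlin d)
    have hexp : HasDerivAt (fun y : ℝ => Real.exp (α * y)) (Real.exp (α * x) * α) x := by
      simpa [Function.comp_def] using (Real.hasDerivAt_exp (α * x)).comp x ((hasDerivAt_id x).const_mul α)
    have hS : HasDerivAt (fun y => ∑ i ∈ Finset.range N, a ^ (n - (i : ℤ)) * Hh i (β * y - δ))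
        (∑ i ∈ Finset.range N, a ^ (n - (i : ℤ)) * (-Hh ((i : ℤ) - 1) (β * x - δ) * β)) x :=
      HasDerivAt.fun_sum fun i _ => (hHh i δ).const_mul _
    have h2 : HasDerivAt (fun y => Hh 0 (β * y - (δ + α / β)))
        (-Hh (-1) (β * x - (δ + α / β)) * β) x := by
      have := hHh 0 (δ + α / β)
      norm_num at this
      simpa [neg_mul] using this
    have hg' := ((hexp.mul hS).const_mul (1 / α)).sub (h2.const_mul c)
    convert hg' using 1
    · rfl
    · rfl
    · rfl
    -- scalar identity
    have hA : c * β * Hh (-1) (β * x - (δ + α / β))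
        = a ^ (n + 1) * (Real.exp (α * x) * Hh (-1) (β * x - δ)) := by
      rw [Hh_neg_one, Hh_neg_one, hc, hc₀]
      have hx : Real.exp (α * δ / β + α ^ 2 / (2 * β ^ 2))
            * Real.exp (-(β * x - (δ + α / β)) ^ 2 / 2)
          = Real.exp (α * x) * Real.exp (-(β * x - δ) ^ 2 / 2) := by
        rw [← Real.exp_add, ← Real.exp_add]
        congr 1
        field_simp
        ring
      calc a ^ (n + 1) * (1 / β) * Real.exp (α * δ / β + α ^ 2 / (2 * β ^ 2)) * β
            * Real.exp (-(β * x - (δ + α / β)) ^ 2 / 2)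
          = a ^ (n + 1) * (Real.exp (α * δ / β + α ^ 2 / (2 * β ^ 2))
              * Real.exp (-(β * x - (δ + α / β)) ^ 2 / 2)) * ((1 / β) * β) := by ring
        _ = a ^ (n + 1) * (Real.exp (α * x) * Real.exp (-(β * x - δ) ^ 2 / 2))
              * ((1 / β) * β) := by rw [hx]
        _ = a ^ (n + 1) * (Real.exp (α * x) * Real.exp (-(β * x - δ) ^ 2 / 2)) := by
            rw [one_div, inv_mul_cancel₀ hβ0, mul_one]
    have hfac : ∑ i ∈ Finset.range N, a ^ (n - (i : ℤ)) * (-Hh ((i : ℤ) - 1) (β * x - δ) * β)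
        = -β * ∑ i ∈ Finset.range N, a ^ (n - (i : ℤ)) * Hh ((i : ℤ) - 1) (β * x - δ) := by
      rw [Finset.mul_sum]
      exact Finset.sum_congr rfl fun i _ => by ring
    rw [hfac, key_sum a ha0 n N hNn (β * x - δ)]
    set S := ∑ i ∈ Finset.range N, a ^ (n - (i : ℤ)) * Hh i (β * x - δ) with hS'
    set E := Real.exp (α * x) with hE
    set H := Hh n (β * x - δ) with hH
    set Hm := Hh (-1) (β * x - δ) with hHm
    have hA' : c * (-Hh (-1) (β * x - (δ + α / β)) * β) = -(a ^ (n + 1) * (E * Hm)) := by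
      rw [← hA]; ring
    rw [show (1 : ℝ) / α * (E * α * S + E * (-β * (a ^ n * Hm + a⁻¹ * (S - H))))
          - c * (-Hh (-1) (β * x - (δ + α / β)) * β)
        = 1 / α * (E * α * S + E * (-β * (a ^ n * Hm + a⁻¹ * (S - H))))
          + a ^ (n + 1) * (E * Hm) from by rw [hA']; ring]
    have hq : a ^ (n + 1) = a ^ n * a := zpow_add_one₀ ha0 n
    rw [hq]
    obtain ⟨P, hP⟩ : ∃ P, a ^ n = P := ⟨_, rfl⟩
    rw [hP, show a⁻¹ = α / β from by rw [ha, inv_div], ha]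
    field_simp
    ring
  have hpos : ∀ x ∈ Set.Ioi k, 0 ≤ Real.exp (α * x) * Hh n (β * x - δ) :=
    fun x _ => mul_nonneg (Real.exp_pos _).le (Hh_nonneg _ _)
  have htend : Filter.Tendsto g atTop (nhds 0) := by
    have h1 : Filter.Tendsto (fun x => (1 / α) * (Real.exp (α * x)
        * ∑ i ∈ Finset.range N, a ^ (n - (i : ℤ)) * Hh i (β * x - δ))) atTop (nhds 0) := by
      have heq : (fun x => (1 / α) * (Real.exp (α * x)
            * ∑ i ∈ Finset.range N, a ^ (n - (i : ℤ)) * Hh i (β * x - δ)))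
          = fun x => ∑ i ∈ Finset.range N,
              ((1 / α) * a ^ (n - (i : ℤ))) * (Real.exp (α * x) * Hh i (β * x - δ)) := by
        funext x
        rw [Finset.mul_sum, Finset.mul_sum]
        exact Finset.sum_congr rfl fun i _ => by ring
      rw [heq]
      have := tendsto_finset_sum (Finset.range N) fun i (_ : i ∈ Finset.range N) =>
        (tendsto_exp_mul_Hh α β δ hβ i).const_mul ((1 / α) * a ^ (n - (i : ℤ)))
      simpa using this
    have h2 : Filter.Tendsto (fun x => c * Hh 0 (β * x - (δ + α / β))) atTop (nhds 0) := by
      have h3 := (tendsto_exp_mul_Hh 0 β (δ + α / β) hβ 0).const_mul c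
      simpa using h3
    have h4 := h1.sub h2
    rw [sub_zero] at h4
    exact h4
  have hcont : ContinuousWithinAt g (Set.Ici k) k := (hderiv k).continuousAt.continuousWithinAt
  have hint := integral_Ioi_of_hasDerivAt_of_nonneg hcont (fun x _ => hderiv x) hpos htend
  rw [In, hint]
  have hsq : Real.sqrt (2 * Real.pi) ≠ 0 := by positivity
  have hstd : Real.sqrt (2 * Real.pi) * stdNormalCDF (-β * k + δ + α / β)
      = Hh 0 (β * k - (δ + α / β)) := by
    rw [Hh_zero, show -β * k + δ + α / β = -(β * k - (δ + α / β)) from by ring, stdNormalCDF_eq]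
  have hstd' : stdNormalCDF (-β * k + δ + α / β)
      = (Real.sqrt (2 * Real.pi))⁻¹ * Hh 0 (β * k - (δ + α / β)) := by
    rw [← hstd]
    field_simp
  rw [hstd', hg, hc]
  field_simp
  ring
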